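/- Let A be a symmetric n×n real matrix with Laplacian A^L (so A^L·1 = 0), and let M = S·A^L·T with S the difference matrix and T the cumulative-sum matrix. Then A^L·T·S = A^L, and consequently the characteristic polynomial of A^L equals t times the characteristic polynomial of M; i.e., the eigenvalues of M are exactly the eigenvalues of A^L with the eigenvalue 0 (from the all-ones kernel vector) removed once. -/

import Mathlib

open Matrix Finset

/-- The (n)×(n+1) difference matrix: `S i i = -1`, `S i (i+1) = 1`, else `0`. -/
noncomputable def Smat (n : ℕ) : Matrix (Fin n) (Fin (n + 1)) ℝ :=
  Matrix.of fun i j => if (j : ℕ) = (i : ℕ) then -1 else if (j : ℕ) = (i : ℕ) + 1 then 1 else 0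

/-- The (n+1)×n cumulative-sum matrix: `T i j = 1` iff `j < i`. -/
noncomputable def Tmat (n : ℕ) : Matrix (Fin (n + 1)) (Fin n) ℝ :=
  Matrix.of fun i j => if (j : ℕ) < (i : ℕ) then 1 else 0

/-- The Laplacian associated with a symmetric matrix `A`:
off-diagonal entries `-A i j`, diagonal entry `∑_{k ≠ i} A i k`. -/
noncomputable def lap {m : Type*} [Fintype m] [DecidableEq m] (A : Matrix m m ℝ) :
    Matrix m m ℝ :=
  Matrix.of fun i j => if i = j then ∑ k ∈ Finset.univ.filter (fun k => k ≠ i), A i k else -A i j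

lemma lap_rowsum {m : Type*} [Fintype m] [DecidableEq m] (A : Matrix m m ℝ) (i : m) :
    ∑ j, lap A i j = 0 := by
  rw [← Finset.add_sum_erase _ _ (Finset.mem_univ i)]
  have h1 : lap A i i = ∑ k ∈ Finset.univ.filter (fun k => k ≠ i), A i k := if_pos rfl
  have h2 : ∀ j ∈ Finset.univ.erase i, lap A i j = -A i j := by
    intro j hj
    exact if_neg (fun h => (Finset.mem_erase.mp hj).1 h.symm)
  rw [h1, Finset.sum_congr rfl h2, Finset.sum_neg_distrib, Finset.filter_ne', add_neg_cancel]

lemma TS_eq (n : ℕ) : Tmat n * Smat n =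
    1 - (Matrix.of (fun _ j => if (j : ℕ) = 0 then (1:ℝ) else 0) :
      Matrix (Fin (n+1)) (Fin (n+1)) ℝ) := by
  ext i j
  simp only [Matrix.mul_apply, Tmat, Smat, Matrix.of_apply, Matrix.sub_apply, Matrix.one_apply]
  have key : ∀ k : Fin n, (if (k : ℕ) < (i : ℕ) then (1:ℝ) else 0) *
      (if (j : ℕ) = (k : ℕ) then -1 else if (j : ℕ) = (k : ℕ) + 1 then 1 else 0)
      = (if (j : ℕ) = (k : ℕ) + 1 ∧ (k : ℕ) < (i : ℕ) then 1 else 0)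
        - (if (j : ℕ) = (k : ℕ) ∧ (k : ℕ) < (i : ℕ) then 1 else 0) := by
    intro k
    split_ifs <;> norm_num <;> omega
  rw [Finset.sum_congr rfl (fun k _ => key k), Finset.sum_sub_distrib]
  have hS2 : ∑ k : Fin n, (if (j : ℕ) = (k : ℕ) + 1 ∧ (k : ℕ) < (i : ℕ) then (1:ℝ) else 0)
      = if 1 ≤ (j : ℕ) ∧ (j : ℕ) ≤ (i : ℕ) then 1 else 0 := by
    by_cases hj : 1 ≤ (j : ℕ)
    · have hjn : (j : ℕ) - 1 < n := by omega
      have congr2 : ∀ k ∈ (Finset.univ : Finset (Fin n)),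
          (if (j : ℕ) = (k : ℕ) + 1 ∧ (k : ℕ) < (i : ℕ) then (1:ℝ) else 0)
          = if k = ⟨(j : ℕ) - 1, hjn⟩ then (if (j : ℕ) ≤ (i : ℕ) then (1:ℝ) else 0) else 0 := by
        intro k _
        by_cases hk : k = ⟨(j : ℕ) - 1, hjn⟩
        · subst hk
          simp only [Fin.val_mk, if_pos rfl, eq_self_iff_true, if_true]
          by_cases hji : (j : ℕ) ≤ (i : ℕ)
          · rw [if_pos hji, if_pos ⟨by omega, by omega⟩]
          · rw [if_neg hji, if_neg (by push_neg; intro _; omega)]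
        · rw [if_neg hk, if_neg]
          rintro ⟨h1, -⟩
          exact hk (Fin.ext (by simp only [Fin.val_mk]; omega))
      rw [Finset.sum_congr rfl congr2, Finset.sum_ite_eq' Finset.univ,
        if_pos (Finset.mem_univ _)]
      by_cases hji : (j : ℕ) ≤ (i : ℕ)
      · rw [if_pos hji, if_pos ⟨hj, hji⟩]
      · rw [if_neg hji, if_neg (by push_neg; intro _; omega)]
    · rw [Finset.sum_eq_zero (fun k _ => if_neg (by push_neg; intro h; omega)),
        if_neg (by push_neg; intro h; omega)]
  have hS1 : ∑ k : Fin n, (if (j : ℕ) = (k : ℕ) ∧ (k : ℕ) < (i : ℕ) then (1:ℝ) else 0)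
      = if (j : ℕ) < (i : ℕ) ∧ (j : ℕ) < n then 1 else 0 := by
    by_cases hj : (j : ℕ) < n
    · have congr1 : ∀ k ∈ (Finset.univ : Finset (Fin n)),
          (if (j : ℕ) = (k : ℕ) ∧ (k : ℕ) < (i : ℕ) then (1:ℝ) else 0)
          = if k = ⟨(j : ℕ), hj⟩ then (if (j : ℕ) < (i : ℕ) then (1:ℝ) else 0) else 0 := by
        intro k _
        by_cases hk : k = ⟨(j : ℕ), hj⟩
        · subst hk
          simp only [Fin.val_mk, if_pos rfl, eq_self_iff_true, if_true]
          by_cases hji : (j : ℕ) < (i : ℕ)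
          · rw [if_pos hji, if_pos ⟨trivial, hji⟩]
          · rw [if_neg hji, if_neg (by push_neg; intro _; omega)]
        · rw [if_neg hk, if_neg]
          rintro ⟨h1, -⟩
          exact hk (Fin.ext (by simp only [Fin.val_mk]; omega))
      rw [Finset.sum_congr rfl congr1, Finset.sum_ite_eq' Finset.univ,
        if_pos (Finset.mem_univ _)]
      by_cases hji : (j : ℕ) < (i : ℕ)
      · rw [if_pos hji, if_pos ⟨hji, hj⟩]
      · rw [if_neg hji, if_neg (by push_neg; intro h; omega)]
    · rw [Finset.sum_eq_zero (fun k _ => if_neg (by push_neg; intro h; omega)),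
        if_neg (by push_neg; intro h; omega)]
  rw [hS2, hS1]
  have hi := i.isLt
  have hj := j.isLt
  simp only [Fin.ext_iff]
  split_ifs <;> first | (exfalso; omega) | norm_num

lemma lap_mul_TS (n : ℕ) (A : Matrix (Fin (n + 1)) (Fin (n + 1)) ℝ) :
    lap A * Tmat n * Smat n = lap A := by
  rw [Matrix.mul_assoc, TS_eq, Matrix.mul_sub, Matrix.mul_one]
  have h0 : lap A * (Matrix.of (fun _ j => if (j : ℕ) = 0 then (1:ℝ) else 0) :
      Matrix (Fin (n+1)) (Fin (n+1)) ℝ) = 0 := by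
    ext i j
    by_cases hj : (j : ℕ) = 0
    · simp [Matrix.mul_apply, hj, lap_rowsum]
    · simp [Matrix.mul_apply, hj, lap_rowsum]
  rw [h0, sub_zero]

set_option synthInstance.maxHeartbeats 1000000 in
set_option maxHeartbeats 2000000 in
lemma charpoly_PQ (n : ℕ) (P : Matrix (Fin (n + 1)) (Fin n) ℝ)
    (Q : Matrix (Fin n) (Fin (n + 1)) ℝ) :
    (P * Q).charpoly = Polynomial.X * (Q * P).charpoly := by
  set φ : Polynomial ℝ →+* (RatFunc ℝ) := algebraMap (Polynomial ℝ) (RatFunc ℝ) with hφ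
  have hinj : Function.Injective φ := IsFractionRing.injective _ _
  apply hinj
  rw [_root_.map_mul]
  set ψ : ℝ →+* (RatFunc ℝ) := algebraMap ℝ (RatFunc ℝ) with hψ
  have hφC : ∀ r : ℝ, φ (Polynomial.C r) = ψ r := fun r =>
    (IsScalarTower.algebraMap_apply ℝ (Polynomial ℝ) (RatFunc ℝ) r).symm
  set x : (RatFunc ℝ) := φ Polynomial.X with hxdef
  have hx : x ≠ 0 := fun h => Polynomial.X_ne_zero ((map_eq_zero_iff φ hinj).mp h)
  have hchar : ∀ (m : ℕ) (M : Matrix (Fin m) (Fin m) ℝ),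
      φ M.charpoly = (x • (1 : Matrix (Fin m) (Fin m) (RatFunc ℝ)) - M.map ψ).det := by
    intro m M
    rw [Matrix.charpoly, RingHom.map_det]
    congr 1
    ext i j
    by_cases h : i = j
    · subst h
      simp [Matrix.charmatrix_apply_eq, hφC, Matrix.one_apply]
      exact hxdef.symm
    · simp [Matrix.charmatrix_apply_ne _ _ _ h, hφC, Matrix.one_apply_ne h, h]
  rw [hchar, hchar]
  have h1 : x • (1 : Matrix (Fin (n+1)) (Fin (n+1)) (RatFunc ℝ)) - (P * Q).map ψ
      = x • ((1 : Matrix (Fin (n+1)) (Fin (n+1)) (RatFunc ℝ)) - (x⁻¹ • P.map ψ) * Q.map ψ) := by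
    rw [Matrix.map_mul, smul_sub, Matrix.smul_mul, smul_smul, mul_inv_cancel₀ hx, one_smul]
  have h2 : x • (1 : Matrix (Fin n) (Fin n) (RatFunc ℝ)) - (Q * P).map ψ
      = x • ((1 : Matrix (Fin n) (Fin n) (RatFunc ℝ)) - (x⁻¹ • (Q.map ψ)) * P.map ψ) := by
    rw [Matrix.map_mul, smul_sub, Matrix.smul_mul, smul_smul, mul_inv_cancel₀ hx, one_smul]
  rw [h1, h2, Matrix.det_smul, Matrix.det_smul]
  have h3 : ((1 : Matrix (Fin (n+1)) (Fin (n+1)) (RatFunc ℝ)) - (x⁻¹ • P.map ψ) * Q.map ψ).det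
      = ((1 : Matrix (Fin n) (Fin n) (RatFunc ℝ)) - Q.map ψ * (x⁻¹ • P.map ψ)).det :=
    Matrix.det_one_sub_mul_comm _ _
  have h4 : Q.map ψ * (x⁻¹ • P.map ψ) = (x⁻¹ • (Q.map ψ)) * P.map ψ := by
    rw [Matrix.mul_smul, Matrix.smul_mul]
  rw [h3, h4]
  simp only [Fintype.card_fin]
  rw [pow_succ]
  ring

theorem lap_charpoly_factor (n : ℕ) (A : Matrix (Fin (n + 1)) (Fin (n + 1)) ℝ)
    (hA : A.IsSymm) :
    lap A * Tmat n * Smat n = lap A ∧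
    (lap A).charpoly = Polynomial.X * (Smat n * lap A * Tmat n).charpoly := by
  refine ⟨lap_mul_TS n A, ?_⟩
  have h := charpoly_PQ n (lap A * Tmat n) (Smat n)
  rw [lap_mul_TS n A] at h
  rw [h, Matrix.mul_assoc]
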